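/- A graph G is a cograph if and only if every induced subgraph of G with at least two vertices contains a pair of twins. -/

import Mathlib

open SimpleGraph

def IsCograph {V : Type*} (G : SimpleGraph V) : Prop :=
  IsEmpty (SimpleGraph.pathGraph 4 ↪g G)

def AreTwins {V : Type*} (G : SimpleGraph V) (u v : V) : Prop :=
  u ≠ v ∧ (G.neighborSet u = G.neighborSet v ∨
    insert u (G.neighborSet u) = insert v (G.neighborSet v))

def DistHereditary {V : Type*} (G : SimpleGraph V) : Prop :=
  ∀ s : Set V, (G.induce s).Connected →
    ∀ u v : s, (G.induce s).dist u v = G.dist u v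

universe u

section CographAux

variable {V : Type u}

lemma isCograph_of_embedding {W : Type*} {G : SimpleGraph V} {H : SimpleGraph W}
    (f : H ↪g G) (h : IsCograph G) : IsCograph H :=
  ⟨fun e => h.false (f.comp e)⟩

lemma isCograph_induce {G : SimpleGraph V} (h : IsCograph G) (s : Set V) :
    IsCograph (G.induce s) :=
  isCograph_of_embedding (SimpleGraph.Embedding.induce s) h

/-- The complement of an embedding. -/
def embCompl {W : Type*} {G : SimpleGraph V} {H : SimpleGraph W} (f : H ↪g G) : Hᶜ ↪g Gᶜ where
  toFun := f
  inj' := f.injective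
  map_rel_iff' := by
    intro a b
    show Gᶜ.Adj (f a) (f b) ↔ _
    rw [compl_adj, compl_adj, f.map_adj_iff, f.injective.ne_iff]

/-- The path graph on 4 vertices is self-complementary. -/
def p4SelfCompl : pathGraph 4 ≃g (pathGraph 4)ᶜ where
  toEquiv := Equiv.mk ![1, 3, 0, 2] ![2, 0, 3, 1] (by decide) (by decide)
  map_rel_iff' := by
    intro a b
    simp only [Equiv.coe_fn_mk, compl_adj, pathGraph_adj]
    revert a b; decide

lemma isCograph_compl {G : SimpleGraph V} (h : IsCograph G) : IsCograph Gᶜ := by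
  constructor
  intro f
  have f2 : (pathGraph 4)ᶜ ↪g Gᶜᶜ := embCompl f
  rw [compl_compl] at f2
  exact h.false (f2.comp p4SelfCompl.toEmbedding)

lemma closed_reachable {G : SimpleGraph V} {S : Set V}
    (hS : ∀ x ∈ S, ∀ y, G.Adj x y → y ∈ S) :
    ∀ {a b : V}, G.Reachable a b → a ∈ S → b ∈ S := by
  have key : ∀ {a b : V}, G.Walk a b → a ∈ S → b ∈ S := by
    intro a b w
    induction w with
    | nil => exact id
    | cons h p ih => exact fun ha => ih (hS _ ha _ h)
  intro a b h ha
  exact key h.some ha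

lemma not_connected_of_closed {G : SimpleGraph V} {S : Set V}
    (hS : ∀ x ∈ S, ∀ y, G.Adj x y → y ∈ S) {a b : V} (ha : a ∈ S) (hb : b ∉ S) :
    ¬G.Connected := fun hc => hb (closed_reachable hS (hc.preconnected a b) ha)

lemma areTwins_iff {G : SimpleGraph V} {u v : V} :
    AreTwins G u v ↔ u ≠ v ∧ ((∀ x, G.Adj u x ↔ G.Adj v x) ∨
      (∀ x, (x = u ∨ G.Adj u x) ↔ (x = v ∨ G.Adj v x))) := by
  unfold AreTwins
  rw [Set.ext_iff, Set.ext_iff]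
  simp only [Set.mem_insert_iff, mem_neighborSet]

lemma areTwins_compl {G : SimpleGraph V} {u v : V} :
    AreTwins Gᶜ u v ↔ AreTwins G u v := by
  rw [areTwins_iff, areTwins_iff]
  have hc : ∀ w x : V, (Gᶜ.Adj w x ↔ ¬(x = w ∨ G.Adj w x)) := by
    intro w x
    rw [compl_adj, not_or]
    exact ⟨fun ⟨h1, h2⟩ => ⟨fun h => h1 h.symm, h2⟩, fun ⟨h1, h2⟩ => ⟨fun h => h1 h.symm, h2⟩⟩
  have hd : ∀ w x : V, ((x = w ∨ Gᶜ.Adj w x) ↔ ¬G.Adj w x) := by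
    intro w x
    rw [compl_adj]
    constructor
    · rintro (rfl | ⟨h1, h2⟩)
      · exact fun h => G.irrefl h
      · exact h2
    · intro h
      rcases eq_or_ne x w with rfl | hne
      · exact Or.inl rfl
      · exact Or.inr ⟨fun he => hne he.symm, h⟩
  constructor
  · rintro ⟨hne, h | h⟩
    · refine ⟨hne, Or.inr fun x => ?_⟩
      have := h x; rw [hc u x, hc v x, not_iff_not] at this; exact this
    · refine ⟨hne, Or.inl fun x => ?_⟩
      have := h x; rw [hd u x, hd v x, not_iff_not] at this; exact this
  · rintro ⟨hne, h | h⟩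
    · refine ⟨hne, Or.inr fun x => ?_⟩
      rw [hd u x, hd v x, not_iff_not]; exact h x
    · refine ⟨hne, Or.inl fun x => ?_⟩
      rw [hc u x, hc v x, not_iff_not]; exact h x

lemma areTwins_lift {G : SimpleGraph V} {S : Set V}
    (hS : ∀ x ∈ S, ∀ y, G.Adj x y → y ∈ S) {u v : S}
    (h : AreTwins (G.induce S) u v) : AreTwins G u.val v.val := by
  rw [areTwins_iff] at h ⊢
  obtain ⟨hne, h⟩ := h
  refine ⟨fun he => hne (Subtype.ext he), ?_⟩
  rcases h with h | h
  · left
    intro x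
    by_cases hx : x ∈ S
    · exact h ⟨x, hx⟩
    · exact ⟨fun ha => absurd (hS _ u.2 _ ha) hx, fun ha => absurd (hS _ v.2 _ ha) hx⟩
  · right
    intro x
    by_cases hx : x ∈ S
    · have := h ⟨x, hx⟩
      rw [Subtype.ext_iff, Subtype.ext_iff] at this
      exact this
    · constructor
      · rintro (he | ha)
        · exact absurd (he ▸ u.2) hx
        · exact absurd (hS _ u.2 _ ha) hx
      · rintro (he | ha)
        · exact absurd (he ▸ v.2) hx
        · exact absurd (hS _ v.2 _ ha) hx

lemma induce_compl_eq {G : SimpleGraph V} (s : Set V) :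
    (G.induce s)ᶜ = Gᶜ.induce s := by
  ext a b
  simp only [compl_adj, comap_adj, Function.Embedding.coe_subtype, ne_eq,
    Subtype.coe_ne_coe]

lemma p4_embed {G : SimpleGraph V} {x0 x1 x2 x3 : V}
    (h01 : G.Adj x0 x1) (h12 : G.Adj x1 x2) (h23 : G.Adj x2 x3)
    (h02 : ¬G.Adj x0 x2) (h03 : ¬G.Adj x0 x3) (h13 : ¬G.Adj x1 x3)
    (n02 : x0 ≠ x2) (n03 : x0 ≠ x3) (n13 : x1 ≠ x3) :
    Nonempty (pathGraph 4 ↪g G) := by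
  have n01 : x0 ≠ x1 := h01.ne
  have n12 : x1 ≠ x2 := h12.ne
  have n23 : x2 ≠ x3 := h23.ne
  refine ⟨⟨⟨![x0, x1, x2, x3], ?_⟩, ?_⟩⟩
  · intro a b hab
    fin_cases a <;> fin_cases b <;>
      simp_all [Matrix.cons_val_zero, Matrix.cons_val_one]
  · intro a b
    have h10 := h01.symm
    have h21 := h12.symm
    have h32 := h23.symm
    have h20 : ¬G.Adj x2 x0 := fun h => h02 h.symm
    have h30 : ¬G.Adj x3 x0 := fun h => h03 h.symm
    have h31 : ¬G.Adj x3 x1 := fun h => h13 h.symm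
    fin_cases a <;> fin_cases b <;>
      simp_all [pathGraph_adj, Function.Embedding.coeFn_mk] <;> assumption

/-- Along a walk from a vertex not satisfying `P` to one satisfying `P` there is an edge
flipping `P`. -/
lemma exists_flip_edge {W' : Type*} {H : SimpleGraph W'} {P : W' → Prop} :
    ∀ {x y : W'}, H.Walk x y → ¬P x → P y → ∃ p q, H.Adj p q ∧ ¬P p ∧ P q := by
  intro x y w
  induction w with
  | nil => exact fun hx hy => absurd hy hx
  | @cons a c b h p ih =>
    intro hx hy
    by_cases hc : P c
    · exact ⟨a, c, h, hx, hc⟩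
    · exact ih hc hy

/-- The key step: if deleting a vertex disconnects a cograph, then the graph or its
complement is disconnected. -/
lemma seinsche_step {G : SimpleGraph V} (hg : IsCograph G) (v : V)
    (hne : (({v}ᶜ : Set V)).Nonempty)
    (hH : ¬(G.induce ({v}ᶜ : Set V)).Connected) :
    ¬G.Connected ∨ ¬Gᶜ.Connected := by
  set W : Set V := ({v}ᶜ : Set V) with hW
  set H : SimpleGraph W := G.induce W with hHdef
  have hWmem : ∀ x : V, x ≠ v → x ∈ W := fun x hx => hx
  have hWne : ∀ x : W, (x : V) ≠ v := fun x => x.2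
  haveI : Nonempty W := hne.to_subtype
  have : ¬H.Preconnected := fun hp => hH (SimpleGraph.Connected.mk hp)
  rw [SimpleGraph.Preconnected] at this
  push_neg at this
  obtain ⟨a, b, hab⟩ := this
  by_cases hA : ∃ x : W, ∀ y : W, H.Reachable x y → ¬G.Adj v y
  · -- G is disconnected
    obtain ⟨x, hx⟩ := hA
    left
    refine not_connected_of_closed (S := {z : V | ∃ y : W, H.Reachable x y ∧ z = y.val})
      ?_ (a := x.val) ⟨x, Reachable.refl x, rfl⟩ (b := v) ?_
    · rintro z ⟨y, hy, rfl⟩ w hzw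
      rcases eq_or_ne w v with rfl | hwv
      · exact absurd hzw.symm (hx y hy)
      · have : H.Adj y ⟨w, hWmem w hwv⟩ := hzw
        exact ⟨⟨w, hWmem w hwv⟩, hy.trans this.reachable, rfl⟩
    · rintro ⟨y, _, hy⟩
      exact hWne y hy.symm
  · push_neg at hA
    by_cases hB : ∀ x : W, G.Adj v x
    · -- v is adjacent to everything, so Gᶜ is disconnected
      right
      obtain ⟨w, hw⟩ := hne
      refine not_connected_of_closed (S := ({v} : Set V)) ?_ (a := v) rfl (b := w) ?_
      · rintro z rfl y hzy
        rw [compl_adj] at hzy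
        exact absurd (hB ⟨y, hWmem y (fun h => hzy.1 h.symm)⟩) hzy.2
      · exact hw
    · push_neg at hB
      obtain ⟨b', hb'⟩ := hB
      obtain ⟨y, hy, hvy⟩ := hA b'
      obtain ⟨p, q, hpq, hvp, hvq⟩ :=
        exists_flip_edge (P := fun z : W => G.Adj v z) hy.some hb' hvy
      have hqc : ∃ c : W, ¬H.Reachable q c := by
        by_cases hqa : H.Reachable q a
        · exact ⟨b, fun hr => hab (hqa.symm.trans hr)⟩
        · exact ⟨a, hqa⟩
      obtain ⟨c, hc⟩ := hqc
      obtain ⟨u, hu, hvu⟩ := hA c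
      have hqu : ¬H.Reachable q u := fun hr => hc (hr.trans hu.symm)
      exfalso
      have hGpq : G.Adj p.val q.val := hpq
      have hGqv : G.Adj q.val v := (hvq).symm
      have key : ∀ z z' : W, ¬H.Reachable z z' → ¬G.Adj z.val z'.val ∧ z.val ≠ z'.val := by
        intro z z' hr
        constructor
        · intro hadj
          exact hr (SimpleGraph.Adj.reachable (show H.Adj z z' from hadj))
        · intro he
          exact hr (by rw [Subtype.ext (he : z.val = z'.val)])
      have hqu' := key q u hqu
      have hpu : ¬H.Reachable p u := fun hr => hqu ((SimpleGraph.Adj.reachable hpq).symm.trans hr)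
      have hpu' := key p u hpu
      have hGpv : ¬G.Adj p.val v := fun h => hvp h.symm
      obtain ⟨e⟩ := p4_embed hGpq hGqv (show G.Adj v u.val from hvu)
        hGpv hpu'.1 hqu'.1 (hWne p) hpu'.2 hqu'.2
      exact hg.false e

/-- Seinsche's theorem: a cograph or its complement is disconnected. -/
lemma seinsche : ∀ (n : ℕ) {V : Type u} [Fintype V] (G : SimpleGraph V),
    Fintype.card V ≤ n → IsCograph G → 2 ≤ Fintype.card V →
    ¬G.Connected ∨ ¬Gᶜ.Connected := by
  intro n
  induction n with
  | zero => intro V _ G hc _ h2; omega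
  | succ n ih =>
    intro V _ G hcard hg h2
    classical
    rcases eq_or_lt_of_le h2 with hn | hn
    · -- exactly two vertices
      have hn2 : Nat.card V = 2 := by rw [Nat.card_eq_fintype_card]; omega
      obtain ⟨a, b, hab, huniv⟩ := Nat.card_eq_two_iff.mp hn2
      have hmem : ∀ x : V, x = a ∨ x = b := by
        intro x
        have : x ∈ ({a, b} : Set V) := huniv ▸ Set.mem_univ x
        exact this
      by_cases hadj : G.Adj a b
      · right
        refine not_connected_of_closed (S := ({a} : Set V)) ?_ (a := a) rfl (b := b)
          (by simpa using hab.symm)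
        rintro z rfl y hzy
        rw [compl_adj] at hzy
        rcases hmem y with rfl | rfl
        · exact absurd rfl hzy.1
        · exact absurd hadj hzy.2
      · left
        refine not_connected_of_closed (S := ({a} : Set V)) ?_ (a := a) rfl (b := b)
          (by simpa using hab.symm)
        rintro z rfl y hzy
        rcases hmem y with rfl | rfl
        · exact absurd hzy (G.irrefl)
        · exact absurd hzy hadj
    · -- at least three vertices: delete one
      have hpos : 0 < Fintype.card V := by omega
      obtain ⟨v⟩ := Fintype.card_pos_iff.mp hpos
      have hcardW : Fintype.card ↥({v}ᶜ : Set V) = Fintype.card V - 1 := by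
        rw [Fintype.card_compl_set]
        simp
      have hW2 : 2 ≤ Fintype.card ↥({v}ᶜ : Set V) := by omega
      have hWn : Fintype.card ↥({v}ᶜ : Set V) ≤ n := by omega
      have hWne : ({v}ᶜ : Set V).Nonempty := by
        rw [← Set.nonempty_coe_sort]
        exact Fintype.card_pos_iff.mp (by omega)
      rcases ih (G.induce ({v}ᶜ : Set V)) hWn (isCograph_induce hg ({v}ᶜ : Set V)) hW2
        with hc | hc
      · exact seinsche_step hg v hWne hc
      · rw [induce_compl_eq] at hc
        have := seinsche_step (isCograph_compl hg) v hWne hc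
        rw [compl_compl] at this
        exact this.symm

/-- Every cograph on at least two vertices contains twins. -/
lemma twins_main : ∀ (n : ℕ) {V : Type u} [Fintype V] (G : SimpleGraph V),
    Fintype.card V ≤ n → IsCograph G → 2 ≤ Fintype.card V →
    ∃ u v : V, AreTwins G u v := by
  intro n
  induction n with
  | zero => intro V _ G hc _ h2; omega
  | succ n ih =>
    intro V _ G hcard hg h2
    classical
    have main : ∀ (G' : SimpleGraph V), IsCograph G' → ¬G'.Connected →
        ∃ u v : V, AreTwins G' u v := by
      intro G' hg' hc
      haveI : Nonempty V := Fintype.card_pos_iff.mp (by omega)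
      have : ¬G'.Preconnected := fun hp => hc (SimpleGraph.Connected.mk hp)
      rw [SimpleGraph.Preconnected] at this
      push_neg at this
      obtain ⟨a, b, hab⟩ := this
      set S : Set V := {x | G'.Reachable a x} with hSdef
      have hSc : ∀ x ∈ S, ∀ y, G'.Adj x y → y ∈ S :=
        fun x hx y hxy => hx.trans hxy.reachable
      have hTc : ∀ x ∈ Sᶜ, ∀ y, G'.Adj x y → y ∈ Sᶜ := by
        intro x hx y hxy hy
        exact hx (closed_reachable hSc hxy.symm.reachable hy)
      have haS : a ∈ S := Reachable.refl a
      have hbT : b ∈ Sᶜ := hab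
      have hcardS : Fintype.card S < Fintype.card V :=
        Fintype.card_lt_of_injective_of_notMem _ Subtype.val_injective
          (b := b) (by rwa [Subtype.range_coe])
      have hcardT : Fintype.card (Sᶜ : Set V) < Fintype.card V :=
        Fintype.card_lt_of_injective_of_notMem _ Subtype.val_injective
          (b := a) (by rw [Subtype.range_coe]; simpa using haS)
      by_cases hS2 : 2 ≤ Fintype.card S
      · obtain ⟨u, v, huv⟩ := ih (G'.induce S) (by omega) (isCograph_induce hg' S) hS2
        exact ⟨u.val, v.val, areTwins_lift hSc huv⟩
      · by_cases hT2 : 2 ≤ Fintype.card (Sᶜ : Set V)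
        · obtain ⟨u, v, huv⟩ := ih (G'.induce Sᶜ) (by omega) (isCograph_induce hg' Sᶜ) hT2
          exact ⟨u.val, v.val, areTwins_lift hTc huv⟩
        · -- both parts are singletons, so both a and b are isolated
          have hcv : Fintype.card S + Fintype.card (Sᶜ : Set V) = Fintype.card V := by
            have h1 := Fintype.card_compl_set S
            have h2 : Fintype.card S ≤ Fintype.card V := set_fintype_card_le_univ S
            omega
          have hS1 : 0 < Fintype.card S := Fintype.card_pos_iff.mpr ⟨a, haS⟩
          have hT1 : 0 < Fintype.card (Sᶜ : Set V) := Fintype.card_pos_iff.mpr ⟨b, hbT⟩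
          refine ⟨a, b, fun he => hab (he ▸ Reachable.refl a), Or.inl ?_⟩
          have hNa : G'.neighborSet a = ∅ := by
            ext y
            simp only [mem_neighborSet, Set.mem_empty_iff_false, iff_false]
            intro hy
            have hyS : y ∈ S := hSc a haS y hy
            have : Fintype.card S ≥ 2 := by
              have : ({⟨a, haS⟩, ⟨y, hyS⟩} : Finset S).card ≤ Fintype.card S :=
                Finset.card_le_univ _
              rwa [Finset.card_insert_of_notMem (by simp [Subtype.ext_iff, hy.ne]),
                Finset.card_singleton] at this
            omega
          have hNb : G'.neighborSet b = ∅ := by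
            ext y
            simp only [mem_neighborSet, Set.mem_empty_iff_false, iff_false]
            intro hy
            have hyT : y ∈ Sᶜ := hTc b hbT y hy
            have : Fintype.card (Sᶜ : Set V) ≥ 2 := by
              have : ({⟨b, hbT⟩, ⟨y, hyT⟩} : Finset (Sᶜ : Set V)).card ≤
                  Fintype.card (Sᶜ : Set V) :=
                Finset.card_le_univ _
              rwa [Finset.card_insert_of_notMem (by simp [Subtype.ext_iff, hy.ne]),
                Finset.card_singleton] at this
            omega
          rw [hNa, hNb]
    rcases seinsche (n+1) G hcard hg h2 with hc | hc
    · exact main G hg hc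
    · obtain ⟨u, v, huv⟩ := main Gᶜ (isCograph_compl hg) hc
      exact ⟨u, v, areTwins_compl.mp huv⟩

lemma areTwins_map_iso {W : Type*} {G : SimpleGraph V} {H : SimpleGraph W}
    (φ : H ≃g G) {a b : W} (h : AreTwins H a b) : AreTwins G (φ a) (φ b) := by
  rw [areTwins_iff] at h ⊢
  obtain ⟨hne, h⟩ := h
  refine ⟨fun he => hne (φ.injective he), ?_⟩
  rcases h with h | h
  · left
    intro x
    have := h (φ.symm x)
    rwa [← φ.map_adj_iff (v := a), ← φ.map_adj_iff (v := b),
      RelIso.apply_symm_apply] at this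
  · right
    intro x
    have := h (φ.symm x)
    rw [← φ.map_adj_iff (v := a), ← φ.map_adj_iff (v := b),
      RelIso.apply_symm_apply] at this
    rwa [show (φ.symm x = a ↔ x = φ a) from ⟨fun he => by rw [← he, RelIso.apply_symm_apply],
      fun he => by rw [he, RelIso.symm_apply_apply]⟩,
      show (φ.symm x = b ↔ x = φ b) from ⟨fun he => by rw [← he, RelIso.apply_symm_apply],
      fun he => by rw [he, RelIso.symm_apply_apply]⟩] at this

lemma no_twins_pathGraph4 (u v : Fin 4) : ¬AreTwins (pathGraph 4) u v := by
  rw [areTwins_iff]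
  rintro ⟨hne, h | h⟩ <;>
  · simp only [pathGraph_adj] at h
    revert hne
    fin_cases u <;> fin_cases v <;> simp_all <;>
      first
        | exact absurd (h 0) (by decide)
        | exact absurd (h 1) (by decide)
        | exact absurd (h 2) (by decide)
        | exact absurd (h 3) (by decide)

end CographAux

theorem stmt4 {V : Type*} [Fintype V] (G : SimpleGraph V) :
    IsCograph G ↔
      ∀ s : Set V, 2 ≤ s.ncard → ∃ u v : s, AreTwins (G.induce s) u v := by
  constructor
  · intro hg s hs
    haveI : Fintype s := Fintype.ofFinite s
    have hcard : 2 ≤ Fintype.card s := by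
      rwa [← Nat.card_coe_set_eq, Nat.card_eq_fintype_card] at hs
    exact twins_main (Fintype.card s) (G.induce s) le_rfl (isCograph_induce hg s) hcard
  · intro h
    constructor
    intro f
    set s : Set V := Set.range ⇑f with hsdef
    have hs : 2 ≤ s.ncard := by
      rw [hsdef, ← Nat.card_coe_set_eq, Nat.card_range_of_injective f.injective,
        Nat.card_eq_fintype_card, Fintype.card_fin]
      omega
    obtain ⟨u, v, huv⟩ := h s hs
    have φ : pathGraph 4 ≃g G.induce s := by
      refine ⟨Equiv.ofInjective ⇑f f.injective, ?_⟩
      intro a b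
      exact f.map_adj_iff
    have := areTwins_map_iso φ.symm huv
    exact no_twins_pathGraph4 _ _ this
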